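/- Let f : A → A′ and g : B → B′ be L-homomorphisms of join-semilattices with zero. For a bi-ideal I of A × B, let h(I) = ∇_{A′,B′} ∪ { ⟨u,v⟩ ∈ A′ × B′ : u ≤ f(x) and v ≤ g(y) for some ⟨x,y⟩ ∈ I }. Then h(I) is a bi-ideal of A′ × B′. -/
import Mathlib


variable {A B : Type*} [SemilatticeSup A] [OrderBot A] [SemilatticeSup B] [OrderBot B]

/-- A bi-ideal of `A × B`: a downward closed subset containing
`∇ = (A × {0}) ∪ ({0} × B)` that is closed under lateral joins. -/
def IsBiIdeal (I : Set (A × B)) : Prop :=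
  (∀ ⦃p q : A × B⦄, q ≤ p → p ∈ I → q ∈ I) ∧
  (∀ a : A, (a, (⊥ : B)) ∈ I) ∧
  (∀ b : B, ((⊥ : A), b) ∈ I) ∧
  (∀ a₀ a₁ : A, ∀ b : B, (a₀, b) ∈ I → (a₁, b) ∈ I → (a₀ ⊔ a₁, b) ∈ I) ∧
  (∀ a : A, ∀ b₀ b₁ : B, (a, b₀) ∈ I → (a, b₁) ∈ I → (a, b₀ ⊔ b₁) ∈ I)

/-- `∇ = (A × {0}) ∪ ({0} × B)`, the least bi-ideal. -/
def nabla (A B : Type*) [SemilatticeSup A] [OrderBot A] [SemilatticeSup B] [OrderBot B] :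
    Set (A × B) := {p | p.1 = ⊥ ∨ p.2 = ⊥}

/-- The pure tensor `a ⊗ b`. -/
def pureTensor (a : A) (b : B) : Set (A × B) :=
  nabla A B ∪ {p | p.1 ≤ a ∧ p.2 ≤ b}

/-- The bi-ideal generated by a subset `X` of `A × B`. -/
def biGen (X : Set (A × B)) : Set (A × B) := ⋂₀ {K | IsBiIdeal K ∧ X ⊆ K}

/-- The join of two bi-ideals in the lattice of bi-ideals. -/
def biSup (I J : Set (A × B)) : Set (A × B) := biGen (I ∪ J)

/-- Elements of the tensor product `A ⊗ B`: the compact (finitely generated) bi-ideals. -/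
def IsTensorElt (I : Set (A × B)) : Prop := ∃ S : Finset (A × B), I = biGen ↑S

/-- An L-homomorphism of join-semilattices with zero. -/
def IsLHom {A B : Type*} [SemilatticeSup A] [OrderBot A] [SemilatticeSup B] [OrderBot B]
    (f : A → B) : Prop :=
  f ⊥ = ⊥ ∧ (∀ a₀ a₁ : A, f (a₀ ⊔ a₁) = f a₀ ⊔ f a₁) ∧
  (∀ a₀ a₁ : A, ∀ b : B, b ≤ f a₀ → b ≤ f a₁ → ∃ x : A, x ≤ a₀ ∧ x ≤ a₁ ∧ b ≤ f x)

/-- The image map on bi-ideals induced by `f` and `g`: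
`h(I) = ∇ ∪ { ⟨u,v⟩ : ∃ ⟨x,y⟩ ∈ I, u ≤ f x, v ≤ g y }`. -/
def hmap {A A' B B' : Type*} [SemilatticeSup A] [OrderBot A] [SemilatticeSup A']
    [OrderBot A'] [SemilatticeSup B] [OrderBot B] [SemilatticeSup B'] [OrderBot B']
    (f : A → A') (g : B → B') (I : Set (A × B)) : Set (A' × B') :=
  nabla A' B' ∪ {p | ∃ q ∈ I, p.1 ≤ f q.1 ∧ p.2 ≤ g q.2}

/-- The image of a bi-ideal under the map induced by L-homomorphisms is a bi-ideal. -/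
theorem hmap_isBiIdeal {A A' B B' : Type*} [SemilatticeSup A] [OrderBot A]
    [SemilatticeSup A'] [OrderBot A'] [SemilatticeSup B] [OrderBot B]
    [SemilatticeSup B'] [OrderBot B'] (f : A → A') (g : B → B')
    (hf : IsLHom f) (hg : IsLHom g) (I : Set (A × B)) (hI : IsBiIdeal I) :
    IsBiIdeal (hmap f g I) := by
  obtain ⟨hdown, hbotA, hbotB, hjA, hjB⟩ := hI
  obtain ⟨hf0, hfsup, hfL⟩ := hf
  obtain ⟨hg0, hgsup, hgL⟩ := hg
  refine ⟨?_, ?_, ?_, ?_, ?_⟩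
  · rintro ⟨u, v⟩ ⟨u', v'⟩ ⟨h1, h2⟩ hp
    rcases hp with (h | h) | ⟨q, hq, hu, hv⟩
    · exact Or.inl (Or.inl (le_bot_iff.mp (h ▸ h1)))
    · exact Or.inl (Or.inr (le_bot_iff.mp (h ▸ h2)))
    · exact Or.inr ⟨q, hq, le_trans h1 hu, le_trans h2 hv⟩
  · intro a; exact Or.inl (Or.inr rfl)
  · intro b; exact Or.inl (Or.inl rfl)
  · intro a₀ a₁ b h0 h1
    rcases h0 with (h | h) | ⟨⟨x₀, y₀⟩, hq0, hu0, hv0⟩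
    · rw [show a₀ = ⊥ from h, bot_sup_eq]; exact h1
    · exact Or.inl (Or.inr h)
    · rcases h1 with (h | h) | ⟨⟨x₁, y₁⟩, hq1, hu1, hv1⟩
      · rw [show a₁ = ⊥ from h, sup_bot_eq]
        exact Or.inr ⟨(x₀, y₀), hq0, hu0, hv0⟩
      · exact Or.inl (Or.inr h)
      · obtain ⟨y, hy0, hy1, hby⟩ := hgL y₀ y₁ b hv0 hv1
        have m0 : (x₀, y) ∈ I := hdown ⟨le_refl x₀, hy0⟩ hq0
        have m1 : (x₁, y) ∈ I := hdown ⟨le_refl x₁, hy1⟩ hq1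
        exact Or.inr ⟨(x₀ ⊔ x₁, y), hjA x₀ x₁ y m0 m1,
          by rw [hfsup]; exact sup_le_sup hu0 hu1, hby⟩
  · intro a b₀ b₁ h0 h1
    rcases h0 with (h | h) | ⟨⟨x₀, y₀⟩, hq0, hu0, hv0⟩
    · exact Or.inl (Or.inl h)
    · rw [show b₀ = ⊥ from h, bot_sup_eq]; exact h1
    · rcases h1 with (h | h) | ⟨⟨x₁, y₁⟩, hq1, hu1, hv1⟩
      · exact Or.inl (Or.inl h)
      · rw [show b₁ = ⊥ from h, sup_bot_eq]
        exact Or.inr ⟨(x₀, y₀), hq0, hu0, hv0⟩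
      · obtain ⟨x, hx0, hx1, hax⟩ := hfL x₀ x₁ a hu0 hu1
        have m0 : (x, y₀) ∈ I := hdown ⟨hx0, le_refl y₀⟩ hq0
        have m1 : (x, y₁) ∈ I := hdown ⟨hx1, le_refl y₁⟩ hq1
        exact Or.inr ⟨(x, y₀ ⊔ y₁), hjB x y₀ y₁ m0 m1, hax,
          by rw [hgsup]; exact sup_le_sup hv0 hv1⟩
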